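/- Suppose the step sizes satisfy t_k > 0 for all k, t_k ≥ t_{k+1} for all k, Σ_{k=0}^∞ t_k = ∞, and Σ_{k=0}^∞ t_k² < ∞, and suppose the set of optimal solutions X* = {x ∈ X : f(x) = inf_{y ∈ X} f(y)} is nonempty, where f = Σ_{i=1}^m f_i. Then the sequence {x_k} converges to some point x* ∈ X*. -/
import Mathlib

open RealInnerProductSpace

open Filter in
/-- Quasi-Fejér convergence: a nonnegative sequence with `d (k+1) ≤ d k + s k`
eventually, `s` nonnegative summable, converges. -/
lemma quasiFejer (d s : ℕ → ℝ) (K : ℕ) (hd : ∀ k, 0 ≤ d k) (hs : ∀ k, 0 ≤ s k)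
    (hssum : Summable s) (hrec : ∀ k, K ≤ k → d (k + 1) ≤ d k + s k) :
    ∃ L, Tendsto d atTop (nhds L) := by
  set T : ℕ → ℝ := fun k => ∑' j, s (j + k) with hT
  have hTsum : ∀ k, Summable fun j => s (j + k) := fun k =>
    (summable_nat_add_iff k).2 hssum
  have hTrec : ∀ k, T k = s k + T (k + 1) := by
    intro k
    have := Summable.tsum_eq_zero_add (hTsum k)
    simpa [hT, Nat.add_assoc, Nat.add_comm 1 k] using this
  have hT0 : ∀ k, 0 ≤ T k := fun k => tsum_nonneg fun j => hs _
  have hTtend : Tendsto T atTop (nhds 0) := by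
    have h1 : ∀ k, T k = (∑' j, s j) - ∑ j ∈ Finset.range k, s j := by
      intro k
      have := (Summable.sum_add_tsum_nat_add k hssum)
      linarith [this]
    have h2 : Tendsto (fun k => (∑' j, s j) - ∑ j ∈ Finset.range k, s j) atTop
        (nhds ((∑' j, s j) - (∑' j, s j))) :=
      (tendsto_const_nhds).sub hssum.hasSum.tendsto_sum_nat
    rw [sub_self] at h2
    exact h2.congr fun k => (h1 k).symm
  set u : ℕ → ℝ := fun k => d k + T k with hu
  have hanti : ∀ j, u (j + 1 + K) ≤ u (j + K) := by
    intro j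
    have h1 := hrec (j + K) (Nat.le_add_left _ _)
    have h2 := hTrec (j + K)
    simp only [hu]
    have : j + 1 + K = (j + K) + 1 := by omega
    rw [this]
    linarith
  have hantitone : Antitone fun j => u (j + K) :=
    antitone_nat_of_succ_le fun j => hanti j
  have hbdd : BddBelow (Set.range fun j => u (j + K)) :=
    ⟨0, by rintro y ⟨j, rfl⟩; exact add_nonneg (hd _) (hT0 _)⟩
  have hconv : Tendsto (fun j => u (j + K)) atTop (nhds (⨅ j, u (j + K))) :=
    tendsto_atTop_ciInf hantitone hbdd
  have huconv : Tendsto u atTop (nhds (⨅ j, u (j + K))) :=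
    (tendsto_add_atTop_iff_nat K).1 hconv
  refine ⟨(⨅ j, u (j + K)) - 0, ?_⟩
  have : Tendsto (fun k => u k - T k) atTop (nhds ((⨅ j, u (j + K)) - 0)) :=
    huconv.sub hTtend
  exact this.congr fun k => by simp [hu]


lemma exists_subgradient {n : ℕ} (f : EuclideanSpace ℝ (Fin n) → ℝ)
    (hf : ConvexOn ℝ Set.univ f) (x₀ : EuclideanSpace ℝ (Fin n)) :
    ∃ g : EuclideanSpace ℝ (Fin n), ∀ y, f x₀ + ⟪g, y - x₀⟫ ≤ f y := by
  have hcont : Continuous f := hf.locallyLipschitz.continuous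
  set S : Set ((EuclideanSpace ℝ (Fin n)) × ℝ) := {p | f p.1 < p.2} with hS
  have hSopen : IsOpen S := isOpen_lt (hcont.comp continuous_fst) continuous_snd
  have hSconv : Convex ℝ S := by
    intro p hp q hq a b ha hb hab
    simp only [hS, Set.mem_setOf_eq] at *
    have h1 : f (a • p.1 + b • q.1) ≤ a * f p.1 + b * f q.1 :=
      hf.2 (Set.mem_univ _) (Set.mem_univ _) ha hb hab
    have h2 : a * f p.1 + b * f q.1 < a * p.2 + b * q.2 := by
      rcases lt_or_eq_of_le ha with ha' | ha'
      · have := mul_lt_mul_of_pos_left hp ha'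
        have := mul_le_mul_of_nonneg_left hq.le hb
        linarith
      · have hb' : 0 < b := by rw [← ha'] at hab; linarith
        have := mul_lt_mul_of_pos_left hq hb'
        have := mul_le_mul_of_nonneg_left hp.le ha
        linarith
    have : (a • p + b • q).1 = a • p.1 + b • q.1 := rfl
    show f ((a • p + b • q).1) < (a • p + b • q).2
    rw [this]
    have : (a • p + b • q).2 = a * p.2 + b * q.2 := rfl
    rw [this]
    linarith
  have hx₀ : (x₀, f x₀) ∉ S := by simp [hS]
  obtain ⟨ℓ, hℓ⟩ := geometric_hahn_banach_point_open hSconv hSopen hx₀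
  set φ : EuclideanSpace ℝ (Fin n) →L[ℝ] ℝ :=
    ℓ.comp (ContinuousLinearMap.inl ℝ _ ℝ) with hφ
  set β : ℝ := ℓ (0, 1) with hβ
  have hdecomp : ∀ (y : EuclideanSpace ℝ (Fin n)) (r : ℝ), ℓ (y, r) = φ y + r * β := by
    intro y r
    have h1 : (y, r) = (y, (0:ℝ)) + r • ((0 : EuclideanSpace ℝ (Fin n)), (1:ℝ)) := by
      simp [Prod.ext_iff]
    rw [h1, map_add, map_smul]
    simp [hφ, hβ, smul_eq_mul]
  have key : ∀ (y : EuclideanSpace ℝ (Fin n)) (r : ℝ), f y < r →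
      φ x₀ + f x₀ * β < φ y + r * β := by
    intro y r h
    have := hℓ (y, r) h
    rwa [hdecomp, hdecomp] at this
  have hβpos : 0 < β := by
    have h1 := key x₀ (f x₀ + 1) (by linarith)
    nlinarith
  have limit : ∀ y, φ x₀ + f x₀ * β ≤ φ y + f y * β := by
    intro y
    by_contra hcon
    push_neg at hcon
    set δ : ℝ := φ x₀ + f x₀ * β - (φ y + f y * β) with hδdef
    have hδ : 0 < δ := by simp only [hδdef]; linarith
    have h2 := key y (f y + δ / β) (lt_add_of_pos_right _ (div_pos hδ hβpos))
    have h3 : (f y + δ / β) * β = f y * β + δ := by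
      field_simp
    rw [h3] at h2
    simp only [hδdef] at h2
    linarith
  set w : EuclideanSpace ℝ (Fin n) := (InnerProductSpace.toDual ℝ _).symm φ with hw
  have hwip : ∀ y, ⟪w, y⟫ = φ y := by
    intro y
    simp [hw, InnerProductSpace.toDual_symm_apply]
  refine ⟨(-(1/β)) • w, fun y => ?_⟩
  rw [real_inner_smul_left, inner_sub_right, hwip, hwip]
  have h3 : (f x₀ - f y) * β ≤ φ y - φ x₀ := by nlinarith [limit y]
  have h4 : f x₀ - f y ≤ (φ y - φ x₀) / β := (le_div_iff₀ hβpos).2 h3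
  have h5 : -(1/β) * (φ y - φ x₀) = -((φ y - φ x₀) / β) := by ring
  linarith

lemma proj_contract {n : ℕ} {X : Set (EuclideanSpace ℝ (Fin n))}
    (hXconvex : Convex ℝ X) (P : EuclideanSpace ℝ (Fin n) → EuclideanSpace ℝ (Fin n))
    (hP : ∀ u, P u ∈ X ∧ ∀ y ∈ X, ‖u - P u‖ ≤ ‖u - y‖)
    (u : EuclideanSpace ℝ (Fin n)) {z : EuclideanSpace ℝ (Fin n)} (hz : z ∈ X) :
    ‖P u - z‖ ≤ ‖u - z‖ := by
  have hmem := (hP u).1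
  have : Nonempty X := ⟨⟨P u, hmem⟩⟩
  have hinf : ‖u - P u‖ = ⨅ w : X, ‖u - (w : EuclideanSpace ℝ (Fin n))‖ := by
    refine le_antisymm (le_ciInf fun w => (hP u).2 w w.2) ?_
    exact ciInf_le ⟨0, by rintro y ⟨w, rfl⟩; exact norm_nonneg _⟩ (⟨P u, hmem⟩ : X)
  have hip := (norm_eq_iInf_iff_real_inner_le_zero hXconvex hmem).1 hinf z hz
  have hdecomp : u - z = (u - P u) + (P u - z) := by abel
  have hexp : ‖u - z‖ ^ 2 = ‖u - P u‖ ^ 2 + 2 * ⟪u - P u, P u - z⟫ + ‖P u - z‖ ^ 2 := by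
    rw [hdecomp]; exact norm_add_sq_real _ _
  have hip2 : 0 ≤ ⟪u - P u, P u - z⟫ := by
    have : P u - z = -(z - P u) := by abel
    rw [this, inner_neg_right]; linarith
  nlinarith [norm_nonneg (P u - z), norm_nonneg (u - z)]

set_option maxHeartbeats 1000000 in
/-- Nonincreasing step sizes with `∑ t k = ∞` and
`∑ t k ² < ∞`, and nonempty solution set: the iterates converge to an optimal
solution. -/
theorem incremental_cp_square_summable_convergence
    (n m W : ℕ) (hW : 1 ≤ W)
    (X : Set (EuclideanSpace ℝ (Fin n)))
    (hXne : X.Nonempty) (hXclosed : IsClosed X) (hXconvex : Convex ℝ X)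
    (f : Fin m → EuclideanSpace ℝ (Fin n) → ℝ)
    (hfconv : ∀ i, ConvexOn ℝ Set.univ (f i))
    (C : ℝ) (hC : 0 < C)
    -- every subgradient of any `f i` at any point of `X` has norm at most `C`
    (hCbound : ∀ i, ∀ z ∈ X, ∀ g : EuclideanSpace ℝ (Fin n),
      (∀ y, f i z + ⟪g, y - z⟫ ≤ f i y) → ‖g‖ ≤ C)
    -- `P` is the Euclidean projection onto `X`
    (P : EuclideanSpace ℝ (Fin n) → EuclideanSpace ℝ (Fin n))
    (hP : ∀ u, P u ∈ X ∧ ∀ y ∈ X, ‖u - P u‖ ≤ ‖u - y‖)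
    -- positive step sizes
    (t : ℕ → ℝ) (ht : ∀ k, 0 < t k)
    -- the iterates, lying in `X`
    (x : ℕ → EuclideanSpace ℝ (Fin n)) (hx : ∀ k, x k ∈ X)
    -- the index sets `B k i ⊆ {0, …, min k (W-1)}`
    (B : ℕ → Fin m → Finset ℕ)
    (hB : ∀ k i, ∀ l ∈ B k i, l ≤ min k (W - 1))
    -- `g i j` is a subgradient of `f i` at `x j` (used for `j = k - l`, `l ∈ B k i`)
    (g : Fin m → ℕ → EuclideanSpace ℝ (Fin n))
    (hg : ∀ k i, ∀ l ∈ B k i, ∀ y,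
      f i (x (k - l)) + ⟪g i (k - l), y - x (k - l)⟫ ≤ f i y)
    -- convex weights
    (α : ℕ → Fin m → ℕ → ℝ)
    (hα0 : ∀ k i l, 0 ≤ α k i l)
    (hα1 : ∀ k i, (B k i).Nonempty → ∑ l ∈ B k i, α k i l = 1)
    (hα2 : ∀ k i, B k i = ∅ → ∀ l, α k i l = 0)
    -- the update rule
    (hupdate : ∀ k, x (k + 1) =
      P (x k - t k • ∑ i : Fin m, ∑ l ∈ B k i, α k i l • g i (k - l)))    -- every component is evaluated at least once in every `W` iterations
    (hfull : ∀ k, W - 1 ≤ k → ∀ i, (B k i).Nonempty)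
    -- nonincreasing step sizes, divergent sum, square-summable
    (hmono : ∀ k, t (k + 1) ≤ t k)
    (hsum : Filter.Tendsto (fun N => ∑ k ∈ Finset.range N, t k)
      Filter.atTop Filter.atTop)
    (hsq : Summable (fun k => (t k) ^ 2))
    -- the set of optimal solutions is nonempty
    (hXstar : ∃ z ∈ X, ∀ w ∈ X, (∑ i : Fin m, f i z) ≤ ∑ i : Fin m, f i w) :
    ∃ xstar,
      xstar ∈ X ∧
      (∀ w ∈ X, (∑ i : Fin m, f i xstar) ≤ ∑ i : Fin m, f i w) ∧
      Filter.Tendsto x Filter.atTop (nhds xstar) := by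
  obtain ⟨z₀, hz₀X, hz₀opt⟩ := hXstar
  set Φ : EuclideanSpace ℝ (Fin n) → ℝ := fun y => ∑ i : Fin m, f i y with hΦ
  set c : ℕ := W - 1 with hc
  set A : ℝ := (m : ℝ) * C with hA
  have hA0 : 0 ≤ A := mul_nonneg (Nat.cast_nonneg m) hC.le
  set v : ℕ → EuclideanSpace ℝ (Fin n) :=
    fun k => ∑ i : Fin m, ∑ l ∈ B k i, α k i l • g i (k - l) with hv
  have htant : Antitone t := antitone_nat_of_succ_le hmono
  -- subgradient norms
  have hgn : ∀ k i, ∀ l ∈ B k i, ‖g i (k - l)‖ ≤ C := by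
    intro k i l hl
    exact hCbound i (x (k - l)) (hx _) _ (hg k i l hl)
  -- norm of the aggregate direction
  have hvn : ∀ k, ‖v k‖ ≤ A := by
    intro k
    refine (norm_sum_le _ _).trans ?_
    have : ∀ i : Fin m, ‖∑ l ∈ B k i, α k i l • g i (k - l)‖ ≤ C := by
      intro i
      refine (norm_sum_le _ _).trans ?_
      rcases (B k i).eq_empty_or_nonempty with h | h
      · simp [h, hC.le]
      · calc ∑ l ∈ B k i, ‖α k i l • g i (k - l)‖
            ≤ ∑ l ∈ B k i, α k i l * C := by
              refine Finset.sum_le_sum fun l hl => ?_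
              rw [norm_smul, Real.norm_eq_abs, abs_of_nonneg (hα0 k i l)]
              exact mul_le_mul_of_nonneg_left (hgn k i l hl) (hα0 k i l)
          _ = C := by rw [← Finset.sum_mul, hα1 k i h, one_mul]
    refine (Finset.sum_le_sum fun i _ => this i).trans ?_
    simp [hA, Finset.sum_const, Finset.card_univ]
  have hsubx : ∀ i : Fin m, ∀ k : ℕ, ∃ G, ∀ y, f i (x k) + ⟪G, y - x k⟫ ≤ f i y :=
    fun i k => exists_subgradient (f i) (hfconv i) (x k)
  choose G hG using hsubx
  have hGn : ∀ i k, ‖G i k‖ ≤ C := fun i k => hCbound i (x k) (hx k) _ (hG i k)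
  have hproj : ∀ u, ∀ z ∈ X, ‖P u - z‖ ≤ ‖u - z‖ :=
    fun u z hz => proj_contract hXconvex P hP u hz
  -- step bound
  have hstep : ∀ k, ‖x (k + 1) - x k‖ ≤ A * t k := by
    intro k
    rw [hupdate k]
    refine (hproj _ _ (hx k)).trans ?_
    have : x k - t k • v k - x k = -(t k • v k) := by abel
    rw [this, norm_neg, norm_smul, Real.norm_eq_abs, abs_of_pos (ht k)]
    rw [mul_comm]
    exact mul_le_mul_of_nonneg_right (hvn k) (ht k).le
  -- path-length bound
  have hpath : ∀ a b : ℕ, a ≤ b → ‖x b - x a‖ ≤ A * ∑ j ∈ Finset.Ico a b, t j := by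
    intro a b hab
    induction b, hab using Nat.le_induction with
    | base => simp
    | succ b hab ih =>
      have h1 : ‖x (b + 1) - x a‖ ≤ ‖x (b + 1) - x b‖ + ‖x b - x a‖ := by
        have := dist_triangle (x (b + 1)) (x b) (x a)
        simpa [dist_eq_norm] using this
      rw [Finset.sum_Ico_succ_top hab, mul_add]
      calc ‖x (b + 1) - x a‖ ≤ ‖x (b + 1) - x b‖ + ‖x b - x a‖ := h1
        _ ≤ A * t b + A * ∑ j ∈ Finset.Ico a b, t j := add_le_add (hstep b) ih
        _ = A * ∑ j ∈ Finset.Ico a b, t j + A * t b := by ring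
  -- deviation bound
  have hdev : ∀ k l : ℕ, l ≤ k → l ≤ c →
      ‖x k - x (k - l)‖ ≤ A * ((c : ℝ) * t (k - c)) := by
    intro k l hlk hlc
    refine (hpath (k - l) k (Nat.sub_le k l)).trans ?_
    refine mul_le_mul_of_nonneg_left ?_ hA0
    have hsum1 : ∑ j ∈ Finset.Ico (k - l) k, t j ≤ (l : ℝ) * t (k - l) := by
      have := Finset.sum_le_card_nsmul (Finset.Ico (k - l) k) t (t (k - l))
        (fun j hj => htant (Finset.mem_Ico.1 hj).1)
      rwa [Nat.card_Ico, Nat.sub_sub_self hlk, nsmul_eq_mul] at this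
    refine hsum1.trans ?_
    have h1 : t (k - l) ≤ t (k - c) := htant (Nat.sub_le_sub_left hlc k)
    have h2 : (l : ℝ) ≤ (c : ℝ) := Nat.cast_le.2 hlc
    exact mul_le_mul h2 h1 (ht _).le (Nat.cast_nonneg c)
  -- error sequence
  set E₀ : ℝ := 4 * C * A * (m : ℝ) * (c : ℝ) + A ^ 2 with hE₀
  have hE₀0 : 0 ≤ E₀ := by positivity
  set s : ℕ → ℝ := fun k => E₀ * t (k - c) ^ 2 with hs
  have hs0 : ∀ k, 0 ≤ s k := fun k => mul_nonneg hE₀0 (sq_nonneg _)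
  have hssum : Summable s := by
    have h1 : Summable fun k => (t ((k + c) - c)) ^ 2 := by
      simpa using hsq
    have h2 : Summable fun k => (t (k - c)) ^ 2 := (summable_nat_add_iff c).1 h1
    exact h2.mul_left E₀
  -- the key inequality
  have key : ∀ z ∈ X, ∀ k, c ≤ k →
      ‖x (k + 1) - z‖ ^ 2 ≤ ‖x k - z‖ ^ 2 - 2 * t k * (Φ (x k) - Φ z) + s k := by
    intro z hz k hk
    have h1 : ‖x (k + 1) - z‖ ≤ ‖(x k - t k • v k) - z‖ := by
      rw [hupdate k]; exact hproj _ _ hz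
    have h1' : ‖x (k + 1) - z‖ ^ 2 ≤ ‖(x k - t k • v k) - z‖ ^ 2 :=
      pow_le_pow_left₀ (norm_nonneg _) h1 2
    have hd : (x k - t k • v k) - z = (x k - z) - t k • v k := by abel
    have h2 : ‖(x k - t k • v k) - z‖ ^ 2
        = ‖x k - z‖ ^ 2 - 2 * (t k * ⟪v k, x k - z⟫) + t k ^ 2 * ‖v k‖ ^ 2 := by
      rw [hd, norm_sub_sq_real, real_inner_smul_right, norm_smul, Real.norm_eq_abs,
        mul_pow, sq_abs, real_inner_comm]
    set R : ℝ := A * ((c : ℝ) * t (k - c)) with hR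
    have hR0 : 0 ≤ R := by
      refine mul_nonneg hA0 (mul_nonneg (Nat.cast_nonneg c) (ht _).le)
    have h3 : Φ (x k) - Φ z - (m : ℝ) * (2 * C * R) ≤ ⟪v k, x k - z⟫ := by
      have hvsum : ⟪v k, x k - z⟫
          = ∑ i : Fin m, ∑ l ∈ B k i, α k i l * ⟪g i (k - l), x k - z⟫ := by
        rw [hv, sum_inner]
        refine Finset.sum_congr rfl fun i _ => ?_
        rw [sum_inner]
        exact Finset.sum_congr rfl fun l _ => real_inner_smul_left _ _ _
      rw [hvsum]
      have hper : ∀ i : Fin m,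
          f i (x k) - f i z - 2 * C * R
            ≤ ∑ l ∈ B k i, α k i l * ⟪g i (k - l), x k - z⟫ := by
        intro i
        have hne := hfull k hk i
        have hone : ∑ l ∈ B k i, α k i l * (f i (x k) - f i z - 2 * C * R)
            = f i (x k) - f i z - 2 * C * R := by
          rw [← Finset.sum_mul, hα1 k i hne, one_mul]
        rw [← hone]
        refine Finset.sum_le_sum fun l hl => ?_
        refine mul_le_mul_of_nonneg_left ?_ (hα0 k i l)
        -- per-term subgradient estimate
        have hlk : l ≤ k := le_trans (hB k i l hl) (min_le_left _ _)
        have hlc : l ≤ c := le_trans (hB k i l hl) (min_le_right _ _)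
        have hgl := hg k i l hl
        have hnorm : ‖g i (k - l)‖ ≤ C := hgn k i l hl
        have hΔ : ‖x k - x (k - l)‖ ≤ R := hdev k l hlk hlc
        have a1 : f i (x (k - l)) - f i z ≤ ⟪g i (k - l), x (k - l) - z⟫ := by
          have h := hgl z
          have hzz : z - x (k - l) = -(x (k - l) - z) := by abel
          rw [hzz, inner_neg_right] at h
          linarith
        have a2 : f i (x k) ≤ f i (x (k - l)) + C * R := by
          have h := hG i k (x (k - l))
          have habs : |⟪G i k, x (k - l) - x k⟫| ≤ C * R := by
            refine (abs_real_inner_le_norm _ _).trans ?_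
            have : ‖x (k - l) - x k‖ ≤ R := by rw [norm_sub_rev]; exact hΔ
            exact mul_le_mul (hGn i k) this (norm_nonneg _) hC.le
          linarith [(abs_le.1 habs).1]
        have a3 : |⟪g i (k - l), x k - x (k - l)⟫| ≤ C * R := by
          refine (abs_real_inner_le_norm _ _).trans ?_
          exact mul_le_mul hnorm hΔ (norm_nonneg _) hC.le
        have hsplit : ⟪g i (k - l), x k - z⟫
            = ⟪g i (k - l), x k - x (k - l)⟫ + ⟪g i (k - l), x (k - l) - z⟫ := by
          rw [← inner_add_right]
          congr 1
          abel
        have := abs_le.1 a3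
        rw [hsplit]
        linarith
      calc Φ (x k) - Φ z - (m : ℝ) * (2 * C * R)
          = ∑ i : Fin m, (f i (x k) - f i z - 2 * C * R) := by
            simp only [hΦ, Finset.sum_sub_distrib, Finset.sum_const, Finset.card_univ,
              Fintype.card_fin, nsmul_eq_mul]
        _ ≤ _ := Finset.sum_le_sum fun i _ => hper i
    have h4 : ‖v k‖ ^ 2 ≤ A ^ 2 := pow_le_pow_left₀ (norm_nonneg _) (hvn k) 2
    have htkc : t k ≤ t (k - c) := htant (Nat.sub_le k c)
    have htk := ht k
    have htkc' := ht (k - c)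
    have hs' : s k = E₀ * t (k - c) ^ 2 := rfl
    -- combine
    have e1 : - (2 * (t k * ⟪v k, x k - z⟫))
        ≤ - (2 * t k * (Φ (x k) - Φ z)) + 2 * t k * ((m : ℝ) * (2 * C * R)) := by
      have := mul_le_mul_of_nonneg_left h3 (by positivity : (0:ℝ) ≤ 2 * t k)
      nlinarith [this]
    have e2 : t k ^ 2 * ‖v k‖ ^ 2 ≤ t (k - c) ^ 2 * A ^ 2 := by
      have hsq1 : t k ^ 2 ≤ t (k - c) ^ 2 := by nlinarith
      exact mul_le_mul hsq1 h4 (sq_nonneg _) (sq_nonneg _)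
    have e3 : 2 * t k * ((m : ℝ) * (2 * C * R)) ≤ 4 * C * A * (m : ℝ) * (c : ℝ) * t (k - c) ^ 2 := by
      have hm0 : (0:ℝ) ≤ (m : ℝ) := Nat.cast_nonneg m
      have hc0 : (0:ℝ) ≤ (c : ℝ) := Nat.cast_nonneg c
      have hrw : 2 * t k * ((m : ℝ) * (2 * C * R))
          = 4 * C * A * (m : ℝ) * (c : ℝ) * (t k * t (k - c)) := by
        rw [hR]; ring
      have h5 : t k * t (k - c) ≤ t (k - c) ^ 2 := by nlinarith
      have hcoef : (0:ℝ) ≤ 4 * C * A * (m : ℝ) * (c : ℝ) := by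
        have := mul_nonneg (mul_nonneg (mul_nonneg (by linarith : (0:ℝ) ≤ 4 * C) hA0) hm0) hc0
        linarith
      rw [hrw]
      exact mul_le_mul_of_nonneg_left h5 hcoef
    rw [hs', hE₀]
    have expand : (4 * C * A * (m : ℝ) * (c : ℝ) + A ^ 2) * t (k - c) ^ 2
        = 4 * C * A * (m : ℝ) * (c : ℝ) * t (k - c) ^ 2 + t (k - c) ^ 2 * A ^ 2 := by ring
    calc ‖x (k + 1) - z‖ ^ 2 ≤ ‖(x k - t k • v k) - z‖ ^ 2 := h1'
      _ = ‖x k - z‖ ^ 2 - 2 * (t k * ⟪v k, x k - z⟫) + t k ^ 2 * ‖v k‖ ^ 2 := h2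
      _ ≤ ‖x k - z‖ ^ 2 - 2 * t k * (Φ (x k) - Φ z)
            + (4 * C * A * (m : ℝ) * (c : ℝ) + A ^ 2) * t (k - c) ^ 2 := by
          linarith [e1, e2, e3, expand]
  -- continuity of Φ
  have Φcont : Continuous Φ := by
    refine continuous_finset_sum _ fun i _ => ?_
    exact (hfconv i).locallyLipschitz.continuous
  -- Fejér convergence of distances to optimal points
  have fejer : ∀ z ∈ X, (∀ w ∈ X, Φ z ≤ Φ w) →
      ∃ L, Filter.Tendsto (fun k => ‖x k - z‖ ^ 2) Filter.atTop (nhds L) := by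
    intro z hz hopt
    refine quasiFejer _ s c (fun k => sq_nonneg _) hs0 hssum fun k hk => ?_
    have h := key z hz k hk
    have h0 : 0 ≤ Φ (x k) - Φ z := sub_nonneg.2 (hopt _ (hx k))
    nlinarith [(ht k).le]
  -- summability of t k * (Φ (x k) - Φ z₀)
  set q : ℕ → ℝ := fun k => t k * (Φ (x k) - Φ z₀) with hq
  have hq0 : ∀ k, 0 ≤ q k := fun k =>
    mul_nonneg (ht k).le (sub_nonneg.2 (hz₀opt _ (hx k)))
  have claim : ∀ N : ℕ,
      (∑ j ∈ Finset.range N, 2 * q (j + c)) + ‖x (N + c) - z₀‖ ^ 2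
        ≤ ‖x c - z₀‖ ^ 2 + ∑ j ∈ Finset.range N, s (j + c) := by
    intro N
    induction N with
    | zero => simp
    | succ N ih =>
      rw [Finset.sum_range_succ, Finset.sum_range_succ]
      have hk := key z₀ hz₀X (N + c) (Nat.le_add_left _ _)
      have : N + 1 + c = (N + c) + 1 := by omega
      rw [this]
      simp only [hq] at *
      linarith
  have hTsum' : Summable fun j => s (j + c) := (summable_nat_add_iff c).2 hssum
  have hqsum : Summable q := by
    set Cb : ℝ := (∑ j ∈ Finset.range c, q j)
      + (‖x c - z₀‖ ^ 2 + ∑' j, s (j + c)) / 2 with hCb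
    refine summable_of_sum_range_le (c := Cb) hq0 fun N => ?_
    have h1 : ∑ j ∈ Finset.range N, q j ≤ ∑ j ∈ Finset.range (c + N), q j := by
      refine Finset.sum_le_sum_of_subset_of_nonneg
        (Finset.range_subset_range.2 (by omega)) fun j _ _ => hq0 j
    have h2 : ∑ j ∈ Finset.range (c + N), q j
        = (∑ j ∈ Finset.range c, q j) + ∑ j ∈ Finset.range N, q (c + j) :=
      Finset.sum_range_add q c N
    have h3 : ∑ j ∈ Finset.range N, q (c + j) ≤ (‖x c - z₀‖ ^ 2 + ∑' j, s (j + c)) / 2 := by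
      have hcl := claim N
      have h4 : ∑ j ∈ Finset.range N, s (j + c) ≤ ∑' j, s (j + c) :=
        Summable.sum_le_tsum _ (fun j _ => hs0 _) hTsum'
      have h5 : ∑ j ∈ Finset.range N, q (c + j) = ∑ j ∈ Finset.range N, q (j + c) := by
        exact Finset.sum_congr rfl fun j _ => by rw [Nat.add_comm]
      have h6 : (0:ℝ) ≤ ‖x (N + c) - z₀‖ ^ 2 := sq_nonneg _
      have h7 : ∑ j ∈ Finset.range N, 2 * q (j + c)
          = 2 * ∑ j ∈ Finset.range N, q (j + c) := by rw [Finset.mul_sum]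
      rw [h5]
      linarith [hcl, h7 ▸ hcl]
    calc ∑ j ∈ Finset.range N, q j ≤ _ := h1
      _ = _ := h2
      _ ≤ Cb := by rw [hCb]; linarith
  -- Φ (x k) gets arbitrarily close to the optimum infinitely often
  have hsmall : ∀ ε : ℝ, 0 < ε → ∀ K₁ : ℕ, ∃ k, K₁ ≤ k ∧ Φ (x k) - Φ z₀ < ε := by
    intro ε hε K₁
    by_contra hcon
    push_neg at hcon
    have hle : ∀ j : ℕ, ε * t (j + K₁) ≤ q (j + K₁) := by
      intro j
      have h1 := hcon (j + K₁) (Nat.le_add_left _ _)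
      have := mul_le_mul_of_nonneg_left h1 (ht (j + K₁)).le
      simpa [hq, mul_comm] using this
    have hst : Summable fun j => ε * t (j + K₁) :=
      Summable.of_nonneg_of_le (fun j => mul_nonneg hε.le (ht _).le) hle
        ((summable_nat_add_iff K₁).2 hqsum)
    have hts : Summable fun j => t (j + K₁) := by
      have := hst.mul_left ε⁻¹
      refine this.congr fun j => ?_
      field_simp
    have hT : Summable t := (summable_nat_add_iff K₁).1 hts
    exact not_tendsto_atTop_of_tendsto_nhds hT.hasSum.tendsto_sum_nat hsum
  -- extract a subsequence with vanishing optimality gap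
  have hψ : ∀ j : ℕ, ∃ k, j ≤ k ∧ Φ (x k) - Φ z₀ < 1 / (j + 1) := by
    intro j
    exact hsmall (1 / (j + 1)) (by positivity) j
  choose ψ hψ1 hψ2 using hψ
  have hψtend : Filter.Tendsto ψ Filter.atTop Filter.atTop :=
    Filter.tendsto_atTop_mono hψ1 Filter.tendsto_id
  have hgap : Filter.Tendsto (fun j => Φ (x (ψ j)) - Φ z₀) Filter.atTop (nhds 0) := by
    have hub : Filter.Tendsto (fun j : ℕ => 1 / ((j : ℝ) + 1)) Filter.atTop (nhds 0) :=
      tendsto_one_div_add_atTop_nhds_zero_nat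
    refine squeeze_zero (fun j => sub_nonneg.2 (hz₀opt _ (hx _))) (fun j => (hψ2 j).le) hub
  -- boundedness of iterates
  obtain ⟨L₀, hL₀⟩ := fejer z₀ hz₀X hz₀opt
  obtain ⟨R₀, hR₀⟩ : ∃ R₀ : ℝ, ∀ k, ‖x k - z₀‖ ^ 2 ≤ R₀ := by
    obtain ⟨R₀, hR₀⟩ := hL₀.bddAbove_range
    exact ⟨R₀, fun k => hR₀ ⟨k, rfl⟩⟩
  have hball : ∀ k, x k ∈ Metric.closedBall z₀ (Real.sqrt R₀) := by
    intro k
    rw [Metric.mem_closedBall, dist_eq_norm]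
    have h1 : ‖x k - z₀‖ ^ 2 ≤ R₀ := hR₀ k
    have := Real.sqrt_le_sqrt h1
    rwa [Real.sqrt_sq (norm_nonneg _)] at this
  have hcomp : IsCompact (Metric.closedBall z₀ (Real.sqrt R₀)) :=
    isCompact_closedBall _ _
  obtain ⟨xbar, hxbar_ball, φ, hφmono, hφtend⟩ :=
    hcomp.tendsto_subseq (fun j => hball (ψ j))
  -- xbar ∈ X
  have hxbarX : xbar ∈ X :=
    hXclosed.mem_of_tendsto hφtend (Filter.Eventually.of_forall fun j => hx _)
  -- xbar is optimal
  have hφatTop : Filter.Tendsto (fun j => ψ (φ j)) Filter.atTop Filter.atTop :=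
    hψtend.comp hφmono.tendsto_atTop
  have hgap2 : Filter.Tendsto (fun j => Φ (x (ψ (φ j))) - Φ z₀) Filter.atTop (nhds 0) :=
    hgap.comp hφmono.tendsto_atTop
  have hΦtend : Filter.Tendsto (fun j => Φ (x (ψ (φ j)))) Filter.atTop (nhds (Φ xbar)) :=
    (Φcont.tendsto xbar).comp hφtend
  have hΦxbar : Φ xbar = Φ z₀ := by
    have h1 : Filter.Tendsto (fun j => Φ (x (ψ (φ j))) - Φ z₀) Filter.atTop
        (nhds (Φ xbar - Φ z₀)) := hΦtend.sub tendsto_const_nhds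
    have := tendsto_nhds_unique h1 hgap2
    linarith
  have hxbaropt : ∀ w ∈ X, Φ xbar ≤ Φ w := fun w hw => hΦxbar ▸ (hz₀opt w hw)
  -- distances to xbar converge; along the subsequence they go to 0
  obtain ⟨L, hL⟩ := fejer xbar hxbarX hxbaropt
  have hsub : Filter.Tendsto (fun j => ‖x (ψ (φ j)) - xbar‖ ^ 2) Filter.atTop (nhds 0) := by
    have h1 : Filter.Tendsto (fun j => x (ψ (φ j)) - xbar) Filter.atTop (nhds 0) := by
      have := hφtend.sub (tendsto_const_nhds (x := xbar))
      simpa using this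
    have h2 : Filter.Tendsto (fun j => ‖x (ψ (φ j)) - xbar‖) Filter.atTop (nhds 0) := by
      simpa using h1.norm
    simpa using h2.pow 2
  have hLsub : Filter.Tendsto (fun j => ‖x (ψ (φ j)) - xbar‖ ^ 2) Filter.atTop (nhds L) :=
    hL.comp hφatTop
  have hL0 : L = 0 := tendsto_nhds_unique hLsub hsub
  rw [hL0] at hL
  -- conclude convergence of x to xbar
  refine ⟨xbar, hxbarX, hxbaropt, ?_⟩
  rw [tendsto_iff_dist_tendsto_zero]
  have h1 : Filter.Tendsto (fun k => Real.sqrt (‖x k - xbar‖ ^ 2)) Filter.atTop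
      (nhds (Real.sqrt 0)) := (Real.continuous_sqrt.tendsto 0).comp hL
  rw [Real.sqrt_zero] at h1
  refine h1.congr fun k => ?_
  rw [Real.sqrt_sq (norm_nonneg _), dist_eq_norm]
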